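/- With Kraus operators (K_i), an orthonormal Hermitian basis (σ_μ) containing σ₀ = I/√d_A, an orthogonal projection P of rank d_S, and R_μ = P(∑_i K_i† σ_μ K_i)P as in the context: if d_S > 1, then max_{u ∈ {1,…,5}} |β_u| < max_{i,j ∈ {1,2}} |α_i · α_j| (strict inequality). -/

import Mathlib

open Matrix Finset

/-- Real part of the trace of a complex matrix (the traces in question are real
for Hermitian matrices). -/
noncomputable def rtr {α : Type} [Fintype α] (M : Matrix α α ℂ) : ℝ :=
  (Matrix.trace M).re

/-- α₁ = ∑_μ (Tr R_μ)². -/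
noncomputable def alpha1 {α I : Type} [Fintype α] [Fintype I]
    (R : I → Matrix α α ℂ) : ℝ := ∑ μ, (rtr (R μ)) ^ 2

/-- α₂ = ∑_μ Tr(R_μ²). -/
noncomputable def alpha2 {α I : Type} [Fintype α] [Fintype I]
    (R : I → Matrix α α ℂ) : ℝ := ∑ μ, rtr (R μ * R μ)

/-- β₁ = ∑_{μ,ν} (Tr(R_μ R_ν))². -/
noncomputable def beta1 {α I : Type} [Fintype α] [Fintype I]
    (R : I → Matrix α α ℂ) : ℝ := ∑ μ, ∑ ν, (rtr (R μ * R ν)) ^ 2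

/-- β₂ = ∑_{μ,ν} Tr(R_μ R_ν)·Tr(R_μ)·Tr(R_ν). -/
noncomputable def beta2 {α I : Type} [Fintype α] [Fintype I]
    (R : I → Matrix α α ℂ) : ℝ := ∑ μ, ∑ ν, rtr (R μ * R ν) * rtr (R μ) * rtr (R ν)

/-- β₃ = ∑_{μ,ν} Tr(R_μ R_ν²)·Tr(R_μ). -/
noncomputable def beta3 {α I : Type} [Fintype α] [Fintype I]
    (R : I → Matrix α α ℂ) : ℝ := ∑ μ, ∑ ν, rtr (R μ * (R ν * R ν)) * rtr (R μ)

/-- β₄ = ∑_{μ,ν} Tr(R_μ² R_ν²). -/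
noncomputable def beta4 {α I : Type} [Fintype α] [Fintype I]
    (R : I → Matrix α α ℂ) : ℝ := ∑ μ, ∑ ν, rtr (R μ * R μ * (R ν * R ν))

/-- β₅ = ∑_{μ,ν} Tr(R_μ R_ν R_μ R_ν). -/
noncomputable def beta5 {α I : Type} [Fintype α] [Fintype I]
    (R : I → Matrix α α ℂ) : ℝ := ∑ μ, ∑ ν, rtr (R μ * R ν * R μ * R ν)

/-- max_{i,j ∈ {1,2}} |α_i α_j|. -/
noncomputable def maxAlpha {α I : Type} [Fintype α] [Fintype I]
    (R : I → Matrix α α ℂ) : ℝ :=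
  max (max |alpha1 R * alpha1 R| |alpha1 R * alpha2 R|)
      (max |alpha2 R * alpha1 R| |alpha2 R * alpha2 R|)

/-- max_{u ∈ {1,…,5}} |β_u|. -/
noncomputable def maxBeta {α I : Type} [Fintype α] [Fintype I]
    (R : I → Matrix α α ℂ) : ℝ :=
  max |beta1 R| (max |beta2 R| (max |beta3 R| (max |beta4 R| |beta5 R|)))

/-! ### Auxiliary machinery: matrices as vectors in a Euclidean space -/

noncomputable def vecM {n : ℕ} (M : Matrix (Fin n) (Fin n) ℂ) :
    EuclideanSpace ℂ (Fin n × Fin n) := WithLp.toLp 2 (fun p => M p.1 p.2)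

local notation "⟪" x ", " y "⟫" => @inner ℂ _ _ x y

lemma inner_vecM {n : ℕ} (A B : Matrix (Fin n) (Fin n) ℂ) :
    ⟪vecM A, vecM B⟫ = Matrix.trace (Aᴴ * B) := by
  simp only [PiLp.inner_apply, RCLike.inner_apply, vecM, Matrix.trace, Matrix.diag,
    Matrix.mul_apply, Matrix.conjTranspose_apply, Fintype.sum_prod_type, WithLp.ofLp_toLp]
  rw [Finset.sum_comm]
  simp [Finset.mul_sum, mul_comm]

lemma vecM_inj {n : ℕ} {A B : Matrix (Fin n) (Fin n) ℂ} (h : vecM A = vecM B) : A = B := by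
  ext i j; exact congrFun (congrArg WithLp.ofLp h) (i, j)

lemma vecM_smul {n : ℕ} (c : ℂ) (A : Matrix (Fin n) (Fin n) ℂ) :
    vecM (c • A) = c • vecM A := rfl

lemma trace_eq_rank_of_idem {n : ℕ} {P : Matrix (Fin n) (Fin n) ℂ} (h : P * P = P) :
    Matrix.trace P = (P.rank : ℂ) := by
  have hproj : LinearMap.IsProj (LinearMap.range P.mulVecLin) P.mulVecLin := by
    constructor
    · intro x; exact LinearMap.mem_range_self _ x
    · rintro x ⟨y, rfl⟩
      have h2 := congrArg Matrix.mulVecLin h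
      rw [Matrix.mulVecLin_mul] at h2
      exact congrFun (congrArg DFunLike.coe h2) y
  have ht := hproj.trace
  rw [LinearMap.trace_eq_matrix_trace ℂ (Pi.basisFun ℂ (Fin n))] at ht
  rw [LinearMap.toMatrix_eq_toMatrix', ← Matrix.toLin'_apply', LinearMap.toMatrix'_toLin'] at ht
  rw [ht]; rfl

section frob
attribute [local instance] Matrix.frobeniusSeminormedAddCommGroup

lemma vecM_norm_eq {n : ℕ} (A : Matrix (Fin n) (Fin n) ℂ) : ‖vecM A‖ = ‖A‖ := by
  rw [EuclideanSpace.norm_eq, Matrix.frobenius_norm_def, ← Real.sqrt_eq_rpow]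
  congr 1
  rw [Fintype.sum_prod_type]
  apply Finset.sum_congr rfl; intro i _
  apply Finset.sum_congr rfl; intro j _
  rw [show ((vecM A).ofLp (i,j) : ℂ) = A i j from rfl, ← Real.rpow_natCast ‖A i j‖ 2]
  norm_num

lemma norm_vecM_mul_le {n : ℕ} (A B : Matrix (Fin n) (Fin n) ℂ) :
    ‖vecM (A * B)‖ ≤ ‖vecM A‖ * ‖vecM B‖ := by
  rw [vecM_norm_eq, vecM_norm_eq, vecM_norm_eq]
  exact Matrix.frobenius_norm_mul A B

lemma norm_vecM_conjTranspose {n : ℕ} (A : Matrix (Fin n) (Fin n) ℂ) :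
    ‖vecM Aᴴ‖ = ‖vecM A‖ := by
  rw [vecM_norm_eq, vecM_norm_eq]
  exact Matrix.frobenius_norm_conjTranspose A
end frob

lemma inner_self_re {E : Type*} [NormedAddCommGroup E] [InnerProductSpace ℂ E] (x : E) :
    (⟪x, x⟫).re = ‖x‖ ^ 2 := by
  have := inner_self_eq_norm_sq (𝕜 := ℂ) x
  simpa using this

lemma abs_re_le_norm (z : ℂ) : |z.re| ≤ ‖z‖ := by
  exact RCLike.abs_re_le_norm (K := ℂ) z

lemma re_sq_le_norm_sq (z : ℂ) : z.re ^ 2 ≤ ‖z‖ ^ 2 := by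
  have h := abs_re_le_norm z
  have : |z.re| ^ 2 ≤ ‖z‖ ^ 2 := by
    apply pow_le_pow_left₀ (abs_nonneg _) h
  simpa [sq_abs] using this

lemma re_inner_sq_le {E : Type*} [NormedAddCommGroup E] [InnerProductSpace ℂ E]
    (x y : E) : (⟪x, y⟫).re ^ 2 ≤ ‖x‖ ^ 2 * ‖y‖ ^ 2 := by
  have h1 := re_sq_le_norm_sq ⟪x, y⟫
  have h2 := norm_inner_le_norm (𝕜 := ℂ) x y
  nlinarith [norm_nonneg (⟪x, y⟫ : ℂ), norm_nonneg x, norm_nonneg y]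

/-- Strict Cauchy–Schwarz for the real part, when `y` is not a multiple of `x`. -/
lemma re_inner_sq_lt {E : Type*} [NormedAddCommGroup E] [InnerProductSpace ℂ E]
    {x y : E} (hx : x ≠ 0) (h : ∀ c : ℂ, y ≠ c • x) :
    (⟪x, y⟫).re ^ 2 < ‖x‖ ^ 2 * ‖y‖ ^ 2 := by
  have hy : y ≠ 0 := fun h0 => h 0 (by simp [h0])
  have h2 := norm_inner_le_norm (𝕜 := ℂ) x y
  rcases lt_or_eq_of_le h2 with hlt | heq
  · have h1 := re_sq_le_norm_sq ⟪x, y⟫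
    nlinarith [norm_nonneg (⟪x, y⟫ : ℂ), mul_nonneg (norm_nonneg x) (norm_nonneg y)]
  · obtain ⟨r, _, hyr⟩ := (norm_inner_eq_norm_iff (𝕜 := ℂ) hx hy).mp heq
    exact absurd hyr (h r)

set_option maxHeartbeats 1000000 in
/-- Kraus operators, orthonormal Hermitian basis containing σ₀ = I/√d_A, an orthogonal
projection P of rank d_S > 1, and R_μ = P(∑_i K_i† σ_μ K_i)P: the strict inequality
max_u |β_u| < max_{i,j} |α_i α_j| holds. -/
theorem max_beta_lt_max_alpha_of_channel {d_A : ℕ} (hdA : 0 < d_A) {J : Type} [Fintype J]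
    (K : J → Matrix (Fin d_A) (Fin d_A) ℂ)
    (hK : ∑ i, (K i)ᴴ * K i = 1)
    (σ : Fin (d_A * d_A) → Matrix (Fin d_A) (Fin d_A) ℂ)
    (hσHerm : ∀ μ, (σ μ).IsHermitian)
    (hσON : ∀ μ ν, Matrix.trace ((σ μ)ᴴ * σ ν) = if μ = ν then 1 else 0)
    (hσ0 : σ ⟨0, Nat.mul_pos hdA hdA⟩ = ((Real.sqrt d_A : ℂ))⁻¹ • (1 : Matrix (Fin d_A) (Fin d_A) ℂ))
    (P : Matrix (Fin d_A) (Fin d_A) ℂ) (hPHerm : P.IsHermitian) (hPproj : P * P = P)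
    (d_S : ℕ) (hPrank : P.rank = d_S) (hdS : 1 < d_S) :
    maxBeta (fun μ => P * (∑ i, (K i)ᴴ * σ μ * K i) * P) <
      maxAlpha (fun μ => P * (∑ i, (K i)ᴴ * σ μ * K i) * P) := by
  classical
  set R : Fin (d_A * d_A) → Matrix (Fin d_A) (Fin d_A) ℂ :=
    fun μ => P * (∑ i, (K i)ᴴ * σ μ * K i) * P with hRdef
  set idx0 : Fin (d_A * d_A) := ⟨0, Nat.mul_pos hdA hdA⟩ with hidx0
  have hPH : Pᴴ = P := hPHerm
  have hRH : ∀ μ, (R μ)ᴴ = R μ := by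
    intro μ
    have hQH : (∑ i, (K i)ᴴ * σ μ * K i)ᴴ = ∑ i, (K i)ᴴ * σ μ * K i := by
      rw [Matrix.conjTranspose_sum]
      refine Finset.sum_congr rfl fun i _ => ?_
      simp [Matrix.conjTranspose_mul, Matrix.mul_assoc, (hσHerm μ).eq]
    show (P * (∑ i, (K i)ᴴ * σ μ * K i) * P)ᴴ = _
    rw [Matrix.conjTranspose_mul, Matrix.conjTranspose_mul, hPH, hQH, ← Matrix.mul_assoc]
  have hPR : ∀ μ, P * R μ = R μ := by
    intro μ
    have hexp : R μ = P * (∑ i, (K i)ᴴ * σ μ * K i) * P := rfl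
    rw [hexp, ← Matrix.mul_assoc, ← Matrix.mul_assoc, hPproj]
  set c0 : ℂ := ((Real.sqrt d_A : ℂ))⁻¹ with hc0
  have hsqpos : (0:ℝ) < Real.sqrt d_A := Real.sqrt_pos.mpr (by exact_mod_cast hdA)
  have hc0ne : c0 ≠ 0 := by
    rw [hc0]
    simp only [ne_eq, inv_eq_zero, Complex.ofReal_eq_zero]
    exact ne_of_gt hsqpos
  have hR0 : R idx0 = c0 • P := by
    show P * (∑ i, (K i)ᴴ * σ idx0 * K i) * P = c0 • P
    have hsum : (∑ i, (K i)ᴴ * (c0 • (1 : Matrix (Fin d_A) (Fin d_A) ℂ)) * K i)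
        = c0 • (1 : Matrix (Fin d_A) (Fin d_A) ℂ) := by
      simp only [Matrix.mul_smul, Matrix.smul_mul, Matrix.mul_one, ← Finset.smul_sum, hK]
    rw [hσ0, hsum, Matrix.mul_smul, Matrix.smul_mul, Matrix.mul_one, hPproj]
  have hTrP : Matrix.trace P = (d_S : ℂ) := by
    rw [trace_eq_rank_of_idem hPproj, hPrank]
  have hnP : ‖vecM P‖ ^ 2 = (d_S : ℝ) := by
    have h := inner_self_re (vecM P)
    rw [inner_vecM, hPH, hPproj, hTrP] at h
    rw [← h]; simp
  have hdS1 : (1:ℝ) < (d_S:ℝ) := by exact_mod_cast hdS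
  have hdS0 : (0:ℝ) < (d_S:ℝ) := by linarith
  have hdA0 : (0:ℝ) < (d_A:ℝ) := by exact_mod_cast hdA
  set a : Fin (d_A * d_A) → ℝ := fun μ => (Matrix.trace (R μ)).re with ha
  have harta : ∀ μ, rtr (R μ) = a μ := fun μ => rfl
  have hg : ∀ μ ν, ⟪vecM (R μ), vecM (R ν)⟫ = Matrix.trace (R μ * R ν) := fun μ ν => by
    rw [inner_vecM, hRH]
  set s1 : ℝ := ∑ μ, a μ ^ 2 with hs1
  set s2 : ℝ := ∑ μ, ‖vecM (R μ)‖ ^ 2 with hs2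
  have halpha1 : alpha1 R = s1 := by
    simp only [alpha1, hs1, harta]
  have halpha2 : alpha2 R = s2 := by
    rw [hs2]
    refine Finset.sum_congr rfl fun μ _ => ?_
    rw [show rtr (R μ * R μ) = (Matrix.trace (R μ * R μ)).re from rfl,
      ← hg μ μ, inner_self_re]
  have hnc0 : ‖c0‖ = (Real.sqrt d_A)⁻¹ := by
    rw [hc0, norm_inv, Complex.norm_real, Real.norm_eq_abs, abs_of_pos hsqpos]
  have hnv0 : ‖vecM (R idx0)‖ ^ 2 = (d_S:ℝ) / d_A := by
    rw [hR0, vecM_smul, norm_smul, mul_pow, hnc0, hnP, inv_pow,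
      Real.sq_sqrt (le_of_lt hdA0)]
    ring
  have hs2pos : 0 < s2 := by
    have h1 : (d_S:ℝ)/d_A ≤ s2 := by
      rw [← hnv0, hs2]
      exact Finset.single_le_sum (f := fun μ => ‖vecM (R μ)‖ ^ 2)
        (fun i _ => sq_nonneg _) (Finset.mem_univ idx0)
    have : (0:ℝ) < (d_S:ℝ)/d_A := by positivity
    linarith
  have ha0 : a idx0 = (d_S:ℝ) * (Real.sqrt d_A)⁻¹ := by
    rw [ha]
    simp only [hR0, Matrix.trace_smul, hTrP, hc0, smul_eq_mul]
    rw [← Complex.ofReal_inv, ← Complex.ofReal_natCast, ← Complex.ofReal_mul]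
    rw [Complex.ofReal_re]
    ring
  have hs1pos : 0 < s1 := by
    have h1 : a idx0 ^ 2 ≤ s1 := by
      rw [hs1]
      exact Finset.single_le_sum (f := fun μ => a μ ^ 2) (fun i _ => sq_nonneg _)
        (Finset.mem_univ idx0)
    have h2 : 0 < a idx0 ^ 2 := by
      rw [ha0]; positivity
    linarith
  set M : ℝ := max s1 s2 with hM
  have hs1M : s1 ≤ M := le_max_left _ _
  have hs2M : s2 ≤ M := le_max_right _ _
  have hMpos : 0 < M := lt_of_lt_of_le hs2pos hs2M
  have hMa : M * M ≤ maxAlpha R := by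
    rcases max_choice s1 s2 with h | h
    · calc M * M = s1 * s1 := by rw [hM, h]
      _ ≤ |alpha1 R * alpha1 R| := by rw [halpha1]; exact le_abs_self _
      _ ≤ max |alpha1 R * alpha1 R| |alpha1 R * alpha2 R| := le_max_left _ _
      _ ≤ maxAlpha R := le_max_left _ _
    · calc M * M = s2 * s2 := by rw [hM, h]
      _ ≤ |alpha2 R * alpha2 R| := by rw [halpha2]; exact le_abs_self _
      _ ≤ max |alpha2 R * alpha1 R| |alpha2 R * alpha2 R| := le_max_right _ _
      _ ≤ maxAlpha R := le_max_right _ _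
  have hs22M : s2 * s2 ≤ M * M := mul_le_mul hs2M hs2M hs2pos.le hMpos.le
  -- β₄ machinery
  have hb4term : ∀ μ ν, rtr (R μ * R μ * (R ν * R ν)) = ‖vecM (R ν * R μ)‖ ^ 2 := by
    intro μ ν
    have htr : Matrix.trace ((R ν * R μ)ᴴ * (R ν * R μ))
        = Matrix.trace (R μ * R μ * (R ν * R ν)) := by
      rw [Matrix.conjTranspose_mul, hRH, hRH, ← Matrix.mul_assoc,
        Matrix.trace_mul_comm]
      simp only [Matrix.mul_assoc]
    rw [show rtr (R μ * R μ * (R ν * R ν)) = (Matrix.trace (R μ * R μ * (R ν * R ν))).re from rfl,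
      ← htr, ← inner_vecM, inner_self_re]
  have hb4termle : ∀ μ ν, ‖vecM (R ν * R μ)‖ ^ 2 ≤ ‖vecM (R μ)‖ ^ 2 * ‖vecM (R ν)‖ ^ 2 := by
    intro μ ν
    calc ‖vecM (R ν * R μ)‖ ^ 2 ≤ (‖vecM (R ν)‖ * ‖vecM (R μ)‖) ^ 2 :=
          pow_le_pow_left₀ (norm_nonneg _) (norm_vecM_mul_le (R ν) (R μ)) 2
      _ = ‖vecM (R μ)‖ ^ 2 * ‖vecM (R ν)‖ ^ 2 := by ring
  have hR00 : R idx0 * R idx0 = (c0 * c0) • P := by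
    rw [hR0, Matrix.smul_mul, Matrix.mul_smul, hPproj, smul_smul]
  have hb4strict : ‖vecM (R idx0 * R idx0)‖ ^ 2
      < ‖vecM (R idx0)‖ ^ 2 * ‖vecM (R idx0)‖ ^ 2 := by
    have hLHS : ‖vecM (R idx0 * R idx0)‖ ^ 2 = (d_S:ℝ) / (d_A * d_A) := by
      rw [hR00, vecM_smul, norm_smul, mul_pow, hnP, norm_mul, hnc0, ← mul_inv,
        Real.mul_self_sqrt hdA0.le]
      field_simp
    rw [hLHS, hnv0, div_mul_div_comm, div_lt_div_iff₀ (by positivity) (by positivity)]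
    have hss : (d_S:ℝ) < (d_S:ℝ) * (d_S:ℝ) := by
      calc (d_S:ℝ) = 1 * d_S := (one_mul _).symm
        _ < (d_S:ℝ) * d_S := mul_lt_mul_of_pos_right hdS1 hdS0
    exact mul_lt_mul_of_pos_right hss (mul_pos hdA0 hdA0)
  have hS4lt : (∑ μ, ∑ ν, ‖vecM (R ν * R μ)‖ ^ 2) < s2 * s2 := by
    rw [hs2, Finset.sum_mul_sum Finset.univ Finset.univ
      (fun μ => ‖vecM (R μ)‖ ^ 2) (fun ν => ‖vecM (R ν)‖ ^ 2)]
    refine Finset.sum_lt_sum (fun μ _ => Finset.sum_le_sum fun ν _ => hb4termle μ ν)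
      ⟨idx0, Finset.mem_univ _, ?_⟩
    exact Finset.sum_lt_sum (fun ν _ => hb4termle idx0 ν)
      ⟨idx0, Finset.mem_univ _, hb4strict⟩
  have hbeta4eq : beta4 R = ∑ μ, ∑ ν, ‖vecM (R ν * R μ)‖ ^ 2 := by
    simp only [beta4]
    exact Finset.sum_congr rfl fun μ _ => Finset.sum_congr rfl fun ν _ => hb4term μ ν
  have hb4 : |beta4 R| < M * M := by
    rw [hbeta4eq, abs_of_nonneg (Finset.sum_nonneg fun μ _ =>
      Finset.sum_nonneg fun ν _ => sq_nonneg _)]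
    exact lt_of_lt_of_le hS4lt hs22M
  -- β₅
  have hnormct : ∀ μ ν, ‖vecM (R μ * R ν)‖ = ‖vecM (R ν * R μ)‖ := by
    intro μ ν
    have h : R μ * R ν = (R ν * R μ)ᴴ := by rw [Matrix.conjTranspose_mul, hRH, hRH]
    rw [h, norm_vecM_conjTranspose]
  have hb5term : ∀ μ ν, |rtr (R μ * R ν * R μ * R ν)| ≤ ‖vecM (R ν * R μ)‖ ^ 2 := by
    intro μ ν
    have htr : Matrix.trace ((R ν * R μ)ᴴ * (R μ * R ν))
        = Matrix.trace (R μ * R ν * R μ * R ν) := by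
      rw [Matrix.conjTranspose_mul, hRH, hRH]
      simp only [Matrix.mul_assoc]
    have h1 : rtr (R μ * R ν * R μ * R ν)
        = (⟪vecM (R ν * R μ), vecM (R μ * R ν)⟫).re := by
      rw [show rtr (R μ * R ν * R μ * R ν) = (Matrix.trace (R μ * R ν * R μ * R ν)).re from rfl,
        ← htr, ← inner_vecM]
    rw [h1, sq]
    calc |(⟪vecM (R ν * R μ), vecM (R μ * R ν)⟫).re|
        ≤ ‖(⟪vecM (R ν * R μ), vecM (R μ * R ν)⟫ : ℂ)‖ := abs_re_le_norm _
      _ ≤ ‖vecM (R ν * R μ)‖ * ‖vecM (R μ * R ν)‖ := norm_inner_le_norm _ _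
      _ = ‖vecM (R ν * R μ)‖ * ‖vecM (R ν * R μ)‖ := by rw [hnormct μ ν]
  have hb5 : |beta5 R| < M * M := by
    have h1 : |beta5 R| ≤ ∑ μ, ∑ ν, ‖vecM (R ν * R μ)‖ ^ 2 := by
      simp only [beta5]
      refine (Finset.abs_sum_le_sum_abs _ _).trans (Finset.sum_le_sum fun μ _ => ?_)
      exact (Finset.abs_sum_le_sum_abs _ _).trans (Finset.sum_le_sum fun ν _ => hb5term μ ν)
    exact lt_of_le_of_lt h1 (lt_of_lt_of_le hS4lt hs22M)
  -- β₁ machinery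
  have hb1term : ∀ μ ν, rtr (R μ * R ν) = (⟪vecM (R μ), vecM (R ν)⟫).re := by
    intro μ ν
    rw [hg μ ν]
    rfl
  have hbeta1eq : beta1 R = ∑ μ, ∑ ν, (⟪vecM (R μ), vecM (R ν)⟫).re ^ 2 := by
    simp only [beta1]
    exact Finset.sum_congr rfl fun μ _ => Finset.sum_congr rfl fun ν _ => by rw [hb1term]
  -- β₂/β₃ machinery
  set X : EuclideanSpace ℂ (Fin d_A × Fin d_A) := ∑ μ, (a μ : ℂ) • vecM (R μ) with hX
  have hXinner : ∀ y : EuclideanSpace ℂ (Fin d_A × Fin d_A),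
      (⟪X, y⟫).re = ∑ μ, a μ * (⟪vecM (R μ), y⟫).re := by
    intro y
    rw [hX, sum_inner, Complex.re_sum]
    refine Finset.sum_congr rfl fun μ _ => ?_
    rw [inner_smul_left, Complex.conj_ofReal, Complex.re_ofReal_mul]
  have hXre : ∀ μ, (⟪vecM (R μ), X⟫).re = ∑ ν, a ν * (⟪vecM (R μ), vecM (R ν)⟫).re := by
    intro μ
    rw [hX, inner_sum, Complex.re_sum]
    refine Finset.sum_congr rfl fun ν _ => ?_
    rw [inner_smul_right, Complex.re_ofReal_mul]
  have hnX : ‖X‖ ^ 2 = ∑ μ, a μ * (⟪vecM (R μ), X⟫).re := by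
    rw [← inner_self_re X, hXinner X]
  have hbeta2X : beta2 R = ‖X‖ ^ 2 := by
    rw [hnX]
    simp only [beta2, harta]
    refine Finset.sum_congr rfl fun μ _ => ?_
    rw [hXre μ, Finset.mul_sum]
    refine Finset.sum_congr rfl fun ν _ => ?_
    rw [hb1term]
    ring
  have hbeta2nonneg : 0 ≤ beta2 R := by rw [hbeta2X]; exact sq_nonneg _
  have hSXle : ∑ μ, (⟪vecM (R μ), X⟫).re ^ 2 ≤ s2 * ‖X‖ ^ 2 := by
    calc ∑ μ, (⟪vecM (R μ), X⟫).re ^ 2 ≤ ∑ μ, ‖vecM (R μ)‖ ^ 2 * ‖X‖ ^ 2 :=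
        Finset.sum_le_sum fun μ _ => re_inner_sq_le _ _
      _ = s2 * ‖X‖ ^ 2 := by rw [hs2, ← Finset.sum_mul]
  have hCSX : (∑ μ, a μ * (⟪vecM (R μ), X⟫).re) ^ 2
      ≤ s1 * ∑ μ, (⟪vecM (R μ), X⟫).re ^ 2 := by
    rw [hs1]
    exact Finset.sum_mul_sq_le_sq_mul_sq _ _ _
  have hb2le : beta2 R ≤ s1 * s2 := by
    rw [hbeta2X]
    by_cases hX0 : ‖X‖ ^ 2 = 0
    · rw [hX0]; exact mul_nonneg hs1pos.le hs2pos.le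
    · have hpos : 0 < ‖X‖ ^ 2 := lt_of_le_of_ne (sq_nonneg _) (Ne.symm hX0)
      have h4 : (‖X‖ ^ 2) ^ 2 ≤ s1 * (s2 * ‖X‖ ^ 2) := by
        calc (‖X‖ ^ 2) ^ 2 = (∑ μ, a μ * (⟪vecM (R μ), X⟫).re) ^ 2 := by rw [hnX]
          _ ≤ s1 * ∑ μ, (⟪vecM (R μ), X⟫).re ^ 2 := hCSX
          _ ≤ s1 * (s2 * ‖X‖ ^ 2) := mul_le_mul_of_nonneg_left hSXle hs1pos.le
      have h4' : ‖X‖ ^ 2 * ‖X‖ ^ 2 ≤ (s1 * s2) * ‖X‖ ^ 2 := by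
        calc ‖X‖ ^ 2 * ‖X‖ ^ 2 = (‖X‖ ^ 2) ^ 2 := (sq _).symm
          _ ≤ s1 * (s2 * ‖X‖ ^ 2) := h4
          _ = (s1 * s2) * ‖X‖ ^ 2 := by ring
      exact le_of_mul_le_mul_right h4' hpos
  -- β₃
  set Wv : EuclideanSpace ℂ (Fin d_A × Fin d_A) := ∑ ν, vecM (R ν * R ν) with hWv
  have hWnorm : ‖Wv‖ ^ 2 = ∑ μ, ∑ ν, ‖vecM (R ν * R μ)‖ ^ 2 := by
    rw [← inner_self_re Wv]
    rw [hWv, sum_inner, Complex.re_sum]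
    refine Finset.sum_congr rfl fun μ _ => ?_
    rw [inner_sum, Complex.re_sum]
    refine Finset.sum_congr rfl fun ν _ => ?_
    have hh : ⟪vecM (R μ * R μ), vecM (R ν * R ν)⟫
        = Matrix.trace (R μ * R μ * (R ν * R ν)) := by
      rw [inner_vecM, Matrix.conjTranspose_mul, hRH]
    rw [hh]
    exact hb4term μ ν
  have hbeta3eq : beta3 R = (⟪X, Wv⟫).re := by
    rw [hXinner Wv]
    simp only [beta3, harta]
    refine Finset.sum_congr rfl fun μ _ => ?_
    rw [hWv, inner_sum, Complex.re_sum, Finset.mul_sum]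
    refine Finset.sum_congr rfl fun ν _ => ?_
    have hh : ⟪vecM (R μ), vecM (R ν * R ν)⟫ = Matrix.trace (R μ * (R ν * R ν)) := by
      rw [inner_vecM, hRH]
    rw [show rtr (R μ * (R ν * R ν)) = (Matrix.trace (R μ * (R ν * R ν))).re from rfl, hh]
    ring
  have hb3 : |beta3 R| < M * M := by
    have h1 : |beta3 R| ≤ ‖X‖ * ‖Wv‖ := by
      rw [hbeta3eq]
      exact (abs_re_le_norm _).trans (norm_inner_le_norm _ _)
    have hWlt : ‖Wv‖ < s2 := by
      have h2 : ‖Wv‖ ^ 2 < s2 ^ 2 := by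
        rw [hWnorm, sq]; exact hS4lt
      exact lt_of_pow_lt_pow_left₀ 2 hs2pos.le h2
    have hXle : ‖X‖ ≤ M := by
      have h2 : ‖X‖ ^ 2 ≤ M * M := le_trans (hbeta2X ▸ hb2le)
        (mul_le_mul hs1M hs2M hs2pos.le hMpos.le)
      by_contra hcon
      push_neg at hcon
      have h3 : M * M < ‖X‖ ^ 2 := by
        rw [sq]; exact mul_lt_mul'' hcon hcon hMpos.le hMpos.le
      exact absurd h2 (not_le.mpr h3)
    have hWM : ‖Wv‖ < M := lt_of_lt_of_le hWlt hs2M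
    calc |beta3 R| ≤ ‖X‖ * ‖Wv‖ := h1
      _ ≤ M * ‖Wv‖ := mul_le_mul_of_nonneg_right hXle (norm_nonneg _)
      _ < M * M := mul_lt_mul_of_pos_left hWM hMpos
  -- β₁ and β₂, by cases
  have hb1le : ∀ μ ν, (⟪vecM (R μ), vecM (R ν)⟫).re ^ 2
      ≤ ‖vecM (R μ)‖ ^ 2 * ‖vecM (R ν)‖ ^ 2 := fun μ ν => re_inner_sq_le _ _
  have hv0ne : vecM (R idx0) ≠ 0 := by
    intro h0
    rw [h0] at hnv0
    simp only [norm_zero] at hnv0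
    have : (0:ℝ) < (d_S:ℝ)/d_A := by positivity
    rw [← hnv0] at this
    simp at this
  have hb12 : |beta1 R| < M * M ∧ |beta2 R| < M * M := by
    by_cases hdeg : ∀ μ, ∃ c : ℂ, R μ = c • P
    · -- degenerate case: every R μ is a multiple of P
      choose cc hcc using hdeg
      have hPne : P ≠ 0 := by
        intro h0
        rw [h0, Matrix.trace_zero] at hTrP
        have : (d_S:ℂ) = 0 := hTrP.symm
        simp at this
        omega
      have hccre : ∀ μ, cc μ = ((cc μ).re : ℂ) := by
        intro μ
        have h1 := hRH μ
        rw [hcc μ, Matrix.conjTranspose_smul, hPH] at h1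
        have h2 : (star (cc μ) - cc μ) • P = 0 := by
          rw [sub_smul, h1, sub_self]
        rcases smul_eq_zero.mp h2 with h3 | h3
        · have h4 : (starRingEnd ℂ) (cc μ) = cc μ := sub_eq_zero.mp h3
          exact ((Complex.conj_eq_iff_re).mp h4).symm
        · exact absurd h3 hPne
      set r : Fin (d_A * d_A) → ℝ := fun μ => (cc μ).re with hr
      have hccr : ∀ μ, R μ = ((r μ : ℝ) : ℂ) • P := by
        intro μ
        rw [hcc μ]
        congr 1
        exact hccre μ
      have hA : ∀ μ, a μ = r μ * d_S := by
        intro μ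
        rw [ha]
        simp only [hccr μ, Matrix.trace_smul, hTrP, smul_eq_mul]
        rw [← Complex.ofReal_natCast, ← Complex.ofReal_mul, Complex.ofReal_re]
      have hgr : ∀ μ ν, (⟪vecM (R μ), vecM (R ν)⟫).re = r μ * r ν * d_S := by
        intro μ ν
        rw [hg μ ν, hccr μ, hccr ν, Matrix.smul_mul, Matrix.mul_smul, hPproj, smul_smul,
          Matrix.trace_smul, hTrP, smul_eq_mul]
        rw [← Complex.ofReal_mul, ← Complex.ofReal_natCast, ← Complex.ofReal_mul,
          Complex.ofReal_re]
      have hnv : ∀ μ, ‖vecM (R μ)‖ ^ 2 = r μ ^ 2 * d_S := by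
        intro μ
        rw [← inner_self_re, hgr μ μ]
        ring
      set σr : ℝ := ∑ μ, r μ ^ 2 with hσr
      have hs1A : s1 = d_S ^ 2 * σr := by
        rw [hs1, hσr, Finset.mul_sum]
        refine Finset.sum_congr rfl fun μ _ => ?_
        rw [hA μ]; ring
      have hs2A : s2 = d_S * σr := by
        rw [hs2, hσr, Finset.mul_sum]
        refine Finset.sum_congr rfl fun μ _ => ?_
        rw [hnv μ]; ring
      have hσrpos : 0 < σr := by
        rcases mul_pos_iff.mp (hs2A ▸ hs2pos) with ⟨_, h⟩ | ⟨h, _⟩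
        · exact h
        · linarith
      have hdSsq : (d_S:ℝ) < (d_S:ℝ) ^ 2 := by
        calc (d_S:ℝ) = 1 * d_S := (one_mul _).symm
          _ < (d_S:ℝ) * d_S := mul_lt_mul_of_pos_right hdS1 hdS0
          _ = (d_S:ℝ) ^ 2 := (sq _).symm
      have hs2lts1 : s2 < s1 := by
        rw [hs1A, hs2A]
        exact mul_lt_mul_of_pos_right hdSsq hσrpos
      have hMs1 : M = s1 := max_eq_left hs2lts1.le
      have hbeta1A : beta1 R = (d_S * σr) ^ 2 := by
        rw [hbeta1eq]
        have : ∀ μ ν, (⟪vecM (R μ), vecM (R ν)⟫).re ^ 2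
            = (r μ ^ 2 * d_S) * (r ν ^ 2 * d_S) := by
          intro μ ν; rw [hgr μ ν]; ring
        calc ∑ μ, ∑ ν, (⟪vecM (R μ), vecM (R ν)⟫).re ^ 2
            = ∑ μ, ∑ ν, (r μ ^ 2 * d_S) * (r ν ^ 2 * d_S) :=
              Finset.sum_congr rfl fun μ _ => Finset.sum_congr rfl fun ν _ => this μ ν
          _ = (∑ μ, r μ ^ 2 * d_S) * (∑ ν, r ν ^ 2 * d_S) := (Finset.sum_mul_sum _ _ _ _).symm
          _ = (d_S * σr) ^ 2 := by
              rw [show ∀ c : ℝ, (∑ μ, r μ ^ 2 * c) = σr * c from fun c => by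
                rw [hσr, Finset.sum_mul]]
              ring
      have hbeta2A : beta2 R = d_S ^ 3 * σr ^ 2 := by
        simp only [beta2, harta]
        have : ∀ μ ν, rtr (R μ * R ν) * a μ * a ν
            = (r μ ^ 2 * d_S ^ 2) * (r ν ^ 2 * d_S) := by
          intro μ ν
          rw [hb1term, hgr μ ν, hA μ, hA ν]
          ring
        calc ∑ μ, ∑ ν, rtr (R μ * R ν) * a μ * a ν
            = ∑ μ, ∑ ν, (r μ ^ 2 * d_S ^ 2) * (r ν ^ 2 * d_S) :=
              Finset.sum_congr rfl fun μ _ => Finset.sum_congr rfl fun ν _ => this μ ν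
          _ = (∑ μ, r μ ^ 2 * d_S ^ 2) * (∑ ν, r ν ^ 2 * d_S) := (Finset.sum_mul_sum _ _ _ _).symm
          _ = d_S ^ 3 * σr ^ 2 := by
              have hfact : ∀ c : ℝ, (∑ μ, r μ ^ 2 * c) = σr * c := fun c => by
                rw [hσr, Finset.sum_mul]
              rw [hfact, hfact]
              ring
      have hpow : ∀ m n : ℕ, m < n → (d_S:ℝ) ^ m * σr ^ 2 < (d_S:ℝ) ^ n * σr ^ 2 :=
        fun m n hmn => mul_lt_mul_of_pos_right
          (pow_lt_pow_right₀ hdS1 hmn) (pow_pos hσrpos 2)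
      constructor
      · rw [hMs1, hs1A, hbeta1A, abs_of_nonneg (sq_nonneg _)]
        calc ((d_S:ℝ) * σr) ^ 2 = (d_S:ℝ) ^ 2 * σr ^ 2 := by ring
          _ < (d_S:ℝ) ^ 4 * σr ^ 2 := hpow 2 4 (by norm_num)
          _ = (d_S:ℝ) ^ 2 * σr * ((d_S:ℝ) ^ 2 * σr) := by ring
      · rw [hMs1, hs1A, hbeta2A,
          abs_of_nonneg (hbeta2A ▸ hbeta2nonneg : (0:ℝ) ≤ (d_S:ℝ) ^ 3 * σr ^ 2)]
        calc (d_S:ℝ) ^ 3 * σr ^ 2 < (d_S:ℝ) ^ 4 * σr ^ 2 := hpow 3 4 (by norm_num)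
          _ = (d_S:ℝ) ^ 2 * σr * ((d_S:ℝ) ^ 2 * σr) := by ring
    · -- nondegenerate case
      push_neg at hdeg
      obtain ⟨μs, hμs⟩ := hdeg
      have hvμs_not : ∀ c : ℂ, vecM (R μs) ≠ c • vecM (R idx0) := by
        intro c hc
        apply hμs (c * c0)
        apply vecM_inj
        rw [vecM_smul, hc, hR0, vecM_smul, smul_smul]
      have hvμsne : vecM (R μs) ≠ 0 := by
        intro h0
        apply hμs 0
        apply vecM_inj
        rw [h0, vecM_smul]
        simp
      have hμsP : ∀ c : ℂ, vecM (R μs) ≠ c • vecM P := by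
        intro c hc
        exact hμs c (vecM_inj (by rw [vecM_smul, hc]))
      have hb1strict : (⟪vecM (R idx0), vecM (R μs)⟫).re ^ 2
          < ‖vecM (R idx0)‖ ^ 2 * ‖vecM (R μs)‖ ^ 2 :=
        re_inner_sq_lt hv0ne hvμs_not
      constructor
      · rw [abs_of_nonneg (by
          rw [hbeta1eq]
          exact Finset.sum_nonneg fun μ _ => Finset.sum_nonneg fun ν _ => sq_nonneg _)]
        have h1 : beta1 R < s2 * s2 := by
          rw [hbeta1eq, hs2, Finset.sum_mul_sum]
          refine Finset.sum_lt_sum (fun μ _ => Finset.sum_le_sum fun ν _ => hb1le μ ν)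
            ⟨idx0, Finset.mem_univ _, ?_⟩
          exact Finset.sum_lt_sum (fun ν _ => hb1le idx0 ν)
            ⟨μs, Finset.mem_univ _, hb1strict⟩
        exact lt_of_lt_of_le h1 hs22M
      · rw [abs_of_nonneg hbeta2nonneg]
        by_cases hX0 : X = 0
        · rw [hbeta2X, hX0]
          simpa using mul_pos hMpos hMpos
        · have hXn : 0 < ‖X‖ ^ 2 := by
            have := norm_pos_iff.mpr hX0
            positivity
          have hv0P : vecM (R idx0) = c0 • vecM P := by rw [hR0, vecM_smul]
          have hSXstrict : ∑ μ, (⟪vecM (R μ), X⟫).re ^ 2 < s2 * ‖X‖ ^ 2 := by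
            have hrw : s2 * ‖X‖ ^ 2 = ∑ μ, ‖vecM (R μ)‖ ^ 2 * ‖X‖ ^ 2 := by
              rw [hs2, Finset.sum_mul]
            rw [hrw]
            by_cases hXP : ∃ t : ℂ, X = t • vecM P
            · obtain ⟨t, ht⟩ := hXP
              have htne : t ≠ 0 := by
                intro h0; apply hX0; rw [ht, h0, zero_smul]
              refine Finset.sum_lt_sum (fun μ _ => re_inner_sq_le _ _)
                ⟨μs, Finset.mem_univ _, ?_⟩
              apply re_inner_sq_lt hvμsne
              intro c hc
              have hcne : c ≠ 0 := by
                intro h0; apply hX0; rw [hc, h0, zero_smul]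
              apply hμsP (c⁻¹ * t)
              have : vecM (R μs) = c⁻¹ • X := by
                rw [hc, smul_smul, inv_mul_cancel₀ hcne, one_smul]
              rw [this, ht, smul_smul]
            · push_neg at hXP
              refine Finset.sum_lt_sum (fun μ _ => re_inner_sq_le _ _)
                ⟨idx0, Finset.mem_univ _, ?_⟩
              apply re_inner_sq_lt hv0ne
              intro c hc
              apply hXP (c * c0)
              rw [hc, hv0P, smul_smul]
          have h4 : (‖X‖ ^ 2) ^ 2 ≤ s1 * ∑ μ, (⟪vecM (R μ), X⟫).re ^ 2 := by
            rw [hnX]; exact hCSX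
          have h5 : s1 * (∑ μ, (⟪vecM (R μ), X⟫).re ^ 2) < s1 * (s2 * ‖X‖ ^ 2) :=
            mul_lt_mul_of_pos_left hSXstrict hs1pos
          have h6 : (‖X‖ ^ 2) ^ 2 < s1 * (s2 * ‖X‖ ^ 2) := lt_of_le_of_lt h4 h5
          have h6' : ‖X‖ ^ 2 * ‖X‖ ^ 2 < (s1 * s2) * ‖X‖ ^ 2 := by
            calc ‖X‖ ^ 2 * ‖X‖ ^ 2 = (‖X‖ ^ 2) ^ 2 := (sq _).symm
              _ < s1 * (s2 * ‖X‖ ^ 2) := h6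
              _ = (s1 * s2) * ‖X‖ ^ 2 := by ring
          have hfin : ‖X‖ ^ 2 < s1 * s2 := lt_of_mul_lt_mul_right h6' (sq_nonneg _)
          rw [hbeta2X]
          exact lt_of_lt_of_le hfin (mul_le_mul hs1M hs2M hs2pos.le hMpos.le)
  refine lt_of_lt_of_le ?_ hMa
  simp only [maxBeta]
  exact max_lt hb12.1 (max_lt hb12.2 (max_lt hb3 (max_lt hb4 hb5)))
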